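/- Let S > 0, α < 0 and K > 0 be such that |√(√3·S)·α/K| < 1 and K + artanh(√(√3·S)·α/K) + artanh(√(√3·S)·α/(2K)) = 0. Then K < 3 − α·√(√3·S), and consequently −4K²/(√3·S) > −4α² + 24α/√(√3·S) − 36/(√3·S). -/

import Mathlib

/-- The inverse hyperbolic tangent, `artanh x = ½ log((1+x)/(1-x))`. -/
noncomputable def artanh (x : ℝ) : ℝ := (1 / 2) * Real.log ((1 + x) / (1 - x))

lemma artanh_nonneg {x : ℝ} (h0 : 0 ≤ x) (h1 : x < 1) : 0 ≤ artanh x := by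
  unfold artanh
  have h : (1:ℝ) ≤ (1 + x) / (1 - x) := by
    rw [le_div_iff₀ (by linarith)]; linarith
  have := Real.log_nonneg h
  linarith

lemma artanh_le {x : ℝ} (h0 : 0 ≤ x) (h1 : x < 1) : artanh x ≤ x / (1 - x) := by
  unfold artanh
  have hpos : 0 < (1 + x) / (1 - x) := div_pos (by linarith) (by linarith)
  have h := Real.log_le_sub_one_of_pos hpos
  have hne : (1:ℝ) - x ≠ 0 := by linarith
  have he : (1 + x) / (1 - x) - 1 = 2 * (x / (1 - x)) := by
    field_simp
    ring
  rw [he] at h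
  linarith

lemma artanh_neg {x : ℝ} (h1 : |x| < 1) : artanh (-x) = -artanh x := by
  rw [abs_lt] at h1
  unfold artanh
  have h : (1 + -x) / (1 - -x) = ((1 + x) / (1 - x))⁻¹ := by
    rw [inv_div]; ring_nf
  rw [h, Real.log_inv]
  ring

/-- A lower bound on the lowest Robin eigenvalue `λ₀ = −4K²/(√3·S)` of the equilateral
triangle: `K < 3 − α·√(√3·S)`, whence `λ₀ > −4α² + 24α/√(√3·S) − 36/(√3·S)`. -/
theorem eigenvalue_lower_bound (S α K : ℝ) (hS : 0 < S) (hα : α < 0) (hK : 0 < K)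
    (habs : |Real.sqrt (Real.sqrt 3 * S) * α / K| < 1)
    (heq : K + artanh (Real.sqrt (Real.sqrt 3 * S) * α / K) +
      artanh (Real.sqrt (Real.sqrt 3 * S) * α / (2 * K)) = 0) :
    K < 3 - α * Real.sqrt (Real.sqrt 3 * S) ∧
    -4 * K ^ 2 / (Real.sqrt 3 * S) >
      -4 * α ^ 2 + 24 * α / Real.sqrt (Real.sqrt 3 * S) - 36 / (Real.sqrt 3 * S) := by
  set A := Real.sqrt (Real.sqrt 3 * S) with hA
  have h3S : 0 < Real.sqrt 3 * S := mul_pos (Real.sqrt_pos.mpr (by norm_num)) hS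
  have hApos : 0 < A := Real.sqrt_pos.mpr h3S
  have hA2 : A ^ 2 = Real.sqrt 3 * S := Real.sq_sqrt h3S.le
  clear_value A
  clear hA
  set u := -(A * α / K) with hu
  clear_value u
  have hupos : 0 < u := by
    rw [hu]
    have : A * α / K < 0 := div_neg_of_neg_of_pos (mul_neg_of_pos_of_neg hApos hα) hK
    linarith
  have hult : u < 1 := by
    have hneg' : A * α / K < 0 := div_neg_of_neg_of_pos (mul_neg_of_pos_of_neg hApos hα) hK
    have : |A * α / K| = u := by rw [abs_of_neg hneg', hu]
    linarith [habs, this.symm.le]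
  have habs1 : |u| < 1 := by rw [abs_of_pos hupos]; exact hult
  have habs2 : |u / 2| < 1 := by rw [abs_of_pos (by linarith)]; linarith
  have hKeq : K = artanh u + artanh (u / 2) := by
    have h1 : A * α / K = -u := by rw [hu]; ring
    have h2 : A * α / (2 * K) = -(u / 2) := by
      rw [hu]; field_simp
    rw [h1, h2, artanh_neg habs1, artanh_neg habs2] at heq
    linarith
  have h1u : 0 < 1 - u := by linarith
  have h2u : 0 < 1 - u / 2 := by linarith
  have e1 : artanh u * (1 - u) ≤ u := by
    have := artanh_le hupos.le hult
    calc artanh u * (1 - u) ≤ (u / (1 - u)) * (1 - u) := by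
          exact mul_le_mul_of_nonneg_right this h1u.le
      _ = u := by field_simp
  have e2 : artanh (u / 2) < 1 := by
    have h := artanh_le (by linarith : (0:ℝ) ≤ u / 2) (by linarith : u / 2 < 1)
    have : (u / 2) / (1 - u / 2) < 1 := by
      rw [div_lt_one h2u]; linarith
    linarith
  have e3 : 0 ≤ artanh (u / 2) := artanh_nonneg (by linarith) (by linarith)
  have hKbound : K * (1 - u) < 3 := by nlinarith
  have huK : u * K = -(A * α) := by
    rw [hu, neg_mul, div_mul_cancel₀ _ (ne_of_gt hK)]
  have hfirst : K < 3 - α * A := by nlinarith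
  refine ⟨hfirst, ?_⟩
  have hB : 0 < 3 - α * A := by nlinarith
  have hKsq : K ^ 2 < (3 - α * A) ^ 2 := by nlinarith
  rw [← hA2]
  have hA2pos : (0:ℝ) < A ^ 2 := by positivity
  have key : (-4 * α ^ 2 + 24 * α / A - 36 / A ^ 2) - (-4 * K ^ 2 / A ^ 2)
      = (4 * K ^ 2 - 4 * (3 - α * A) ^ 2) / A ^ 2 := by
    field_simp; ring
  have hneg : (4 * K ^ 2 - 4 * (3 - α * A) ^ 2) / A ^ 2 < 0 :=
    div_neg_of_neg_of_pos (by nlinarith) hA2pos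
  linarith [key ▸ hneg]
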